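/- Let p be any prime (including p = 2), k ≥ 1, ε ∈ {1,−1}, m ≡ ε (mod p^{⌈k/2⌉}), and let x be an integer. Then (x−m)(xm−1) ≡ 0 (mod p^k) if and only if x ≡ ε (mod p^{⌈k/2⌉}). -/

import Mathlib

theorem stmt5 (p : ℕ) (hp : p.Prime) (k : ℕ) (hk : 1 ≤ k)
    (ε : ℤ) (hε : ε = 1 ∨ ε = -1) (m : ℤ)
    (hm : m ≡ ε [ZMOD ((p : ℤ) ^ ((k + 1) / 2))]) (x : ℤ) :
    ((p : ℤ) ^ k) ∣ (x - m) * (x * m - 1) ↔ x ≡ ε [ZMOD ((p : ℤ) ^ ((k + 1) / 2))] := by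
  have hprime : Prime (p : ℤ) := Nat.prime_iff_prime_int.mp hp
  set c : ℕ := (k + 1) / 2 with hc
  have hc1 : 1 ≤ c := by omega
  have h2c : k ≤ 2 * c := by omega
  have h2c' : 2 * c ≤ k + 1 := by omega
  have hqm : ((p : ℤ) ^ c) ∣ (m - ε) := (Int.modEq_iff_dvd.mp hm.symm)
  -- q ∣ m² − 1
  have hε2 : ε * ε = 1 := by rcases hε with h | h <;> simp [h]
  have hqm2 : ((p : ℤ) ^ c) ∣ (m * m - 1) := by
    have : m * m - 1 = (m - ε) * (m + ε) := by rcases hε with h | h <;> subst h <;> ring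
    rw [this]
    exact hqm.mul_right _
  -- p ∤ m
  have hpm : ¬ ((p : ℤ) ∣ m) := by
    intro hdvd
    have hpq : (p : ℤ) ∣ (p : ℤ) ^ c := dvd_pow_self _ (by omega)
    have hpe : (p : ℤ) ∣ ε := by
      have h' : (p : ℤ) ∣ (m - (m - ε)) := hdvd.sub (hpq.trans hqm)
      simpa using h'
    rcases hε with h | h <;> subst h
    · exact hprime.not_dvd_one hpe
    · exact hprime.not_dvd_one (dvd_neg.mp hpe)
  constructor
  · intro h
    -- it suffices that q ∣ x − m
    suffices hxm : ((p : ℤ) ^ c) ∣ (x - m) by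
      rw [Int.modEq_iff_dvd]
      have : ε - x = -((x - m) + (m - ε)) := by ring
      rw [this]
      exact (hxm.add hqm).neg_right
    by_contra hA
    have hklem : (k : ℕ∞) ≤ emultiplicity ((p : ℤ)) ((x - m) * (x * m - 1)) :=
      le_emultiplicity_of_pow_dvd h
    rw [emultiplicity_mul hprime] at hklem
    have hea : emultiplicity ((p : ℤ)) (x - m) < (c : ℕ∞) :=
      emultiplicity_lt_iff_not_dvd.mpr hA
    -- then p^c ∣ x*m − 1
    have heb : (c : ℕ∞) ≤ emultiplicity ((p : ℤ)) (x * m - 1) := by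
      by_contra heb
      push_neg at heb
      have h1 : emultiplicity ((p : ℤ)) (x - m) + 1 ≤ (c : ℕ∞) :=
        (ENat.add_one_le_iff (LT.lt.ne_top hea)).mpr hea
      have h2 : emultiplicity ((p : ℤ)) (x * m - 1) + 1 ≤ (c : ℕ∞) :=
        (ENat.add_one_le_iff (LT.lt.ne_top heb)).mpr heb
      have h3 : (k : ℕ∞) + 2 ≤ (c : ℕ∞) + (c : ℕ∞) := by
        calc (k : ℕ∞) + 2 ≤ emultiplicity ((p : ℤ)) (x - m) +
              emultiplicity ((p : ℤ)) (x * m - 1) + 2 := by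
              exact add_le_add_left hklem 2
          _ = (emultiplicity ((p : ℤ)) (x - m) + 1) +
              (emultiplicity ((p : ℤ)) (x * m - 1) + 1) := by ring
          _ ≤ (c : ℕ∞) + (c : ℕ∞) := add_le_add h1 h2
      have h4 : ((k + 2 : ℕ) : ℕ∞) ≤ ((2 * c : ℕ) : ℕ∞) := by
        push_cast
        convert h3 using 1 <;> ring
      rw [Nat.cast_le] at h4
      omega
    have hB : ((p : ℤ) ^ c) ∣ (x * m - 1) := pow_dvd_of_le_emultiplicity heb
    -- q ∣ m(x−m) = (xm−1) − (m²−1)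
    have hmxm : ((p : ℤ) ^ c) ∣ m * (x - m) := by
      have : m * (x - m) = (x * m - 1) - (m * m - 1) := by ring
      rw [this]
      exact hB.sub hqm2
    have hcop : IsCoprime ((p : ℤ) ^ c) m :=
      (hprime.coprime_iff_not_dvd.mpr hpm).pow_left
    exact hA (hcop.dvd_of_dvd_mul_left hmxm)
  · intro h
    have hxε : ((p : ℤ) ^ c) ∣ (x - ε) := Int.modEq_iff_dvd.mp h.symm
    have h1 : ((p : ℤ) ^ c) ∣ (x - m) := by
      have : x - m = (x - ε) - (m - ε) := by ring
      rw [this]; exact hxε.sub hqm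
    have h2 : ((p : ℤ) ^ c) ∣ (x * m - 1) := by
      have : x * m - 1 = m * (x - m) + (m * m - 1) := by ring
      rw [this]; exact (h1.mul_left m).add hqm2
    have : ((p : ℤ) ^ (2 * c)) ∣ (x - m) * (x * m - 1) := by
      rw [two_mul, pow_add]
      exact mul_dvd_mul h1 h2
    exact (pow_dvd_pow _ h2c).trans this
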